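/- Assume α·λ·c > (λ+δ)². Let ψ(x) = (r+α)·e^{rx} − (s+α)·e^{sx} and b = (1/(r−s))·ln( s²(s+α)/(r²(r+α)) ) (so that b > 0), and define Φ(x) = ψ(x)/ψ'(b) for 0 ≤ x ≤ b and Φ(x) = x − b + ψ(b)/ψ'(b) for x > b. Then Φ is continuously differentiable on (0,∞) and solves the quasi-variational inequality: for every x > 0, max{ c·Φ'(x) − (λ+δ)·Φ(x) + λ·∫₀ˣ Φ(x−y)·α·e^{−αy} dy , 1 − Φ'(x) } = 0. -/

import Mathlib

lemma expDeriv (r x : ℝ) : HasDerivAt (fun y => Real.exp (r*y)) (r * Real.exp (r*x)) x := by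
  convert ((hasDerivAt_id x).const_mul r).exp using 1 <;> simp [mul_comm]

lemma glue_hasDerivAt {f g f' g' : ℝ → ℝ} {b : ℝ}
    (hf : ∀ x, HasDerivAt f (f' x) x) (hg : ∀ x, HasDerivAt g (g' x) x)
    (hv : f b = g b) (hd : f' b = g' b) (x : ℝ) :
    HasDerivAt (fun y => if y ≤ b then f y else g y) (if x ≤ b then f' x else g' x) x := by
  rcases lt_trichotomy x b with h | h | h
  · rw [if_pos h.le]
    apply (hf x).congr_of_eventuallyEq
    filter_upwards [eventually_lt_nhds h] with y hy
    rw [if_pos hy.le]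
  · subst h
    rw [if_pos le_rfl]
    have h1 : HasDerivWithinAt (fun y => if y ≤ x then f y else g y) (f' x) (Set.Iic x) x := by
      apply (hf x).hasDerivWithinAt.congr
      · intro y hy; rw [if_pos (Set.mem_Iic.mp hy)]
      · rw [if_pos le_rfl]
    have h2 : HasDerivWithinAt (fun y => if y ≤ x then f y else g y) (f' x) (Set.Ici x) x := by
      rw [hd]
      apply (hg x).hasDerivWithinAt.congr
      · intro y hy
        rcases eq_or_lt_of_le (Set.mem_Ici.mp hy) with h' | h'
        · rw [← h', if_pos le_rfl, hv]
        · rw [if_neg (not_le.mpr h')]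
      · rw [if_pos le_rfl, hv]
    have := h1.union h2
    rwa [Set.Iic_union_Ici, hasDerivWithinAt_univ] at this
  · rw [if_neg (not_le.mpr h)]
    apply (hg x).congr_of_eventuallyEq
    filter_upwards [eventually_gt_nhds h] with y hy
    rw [if_neg (not_le.mpr hy)]

set_option maxHeartbeats 1600000 in
theorem stmt_18 (c lam del al r s b : ℝ) (Φ : ℝ → ℝ)
    (hc : 0 < c) (hlam : 0 < lam) (hdel : 0 < del) (hal : 0 < al)
    (hr : c * r ^ 2 - (lam + del - al * c) * r - al * del = 0)
    (hs : c * s ^ 2 - (lam + del - al * c) * s - al * del = 0)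
    (hs1 : -al < s) (hs2 : s < 0) (hr1 : 0 < r)
    (hcond : al * lam * c > (lam + del) ^ 2)
    (hb : b = (1 / (r - s)) * Real.log (s ^ 2 * (s + al) / (r ^ 2 * (r + al))))
    (hΦ : ∀ x, Φ x =
      if x ≤ b then
        ((r + al) * Real.exp (r * x) - (s + al) * Real.exp (s * x))
          / (r * (r + al) * Real.exp (r * b) - s * (s + al) * Real.exp (s * b))
      else
        x - b + ((r + al) * Real.exp (r * b) - (s + al) * Real.exp (s * b))
          / (r * (r + al) * Real.exp (r * b) - s * (s + al) * Real.exp (s * b))) :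
    0 < b ∧
    (∀ x > (0:ℝ), DifferentiableAt ℝ Φ x) ∧
    ContinuousOn (deriv Φ) (Set.Ioi 0) ∧
    ∀ x > (0:ℝ),
      max (c * deriv Φ x - (lam + del) * Φ x
          + lam * ∫ y in (0:ℝ)..x, Φ (x - y) * (al * Real.exp (-al * y)))
        (1 - deriv Φ x) = 0 := by
  have hrs0 : (0:ℝ) < r - s := by linarith
  have hra : (0:ℝ) < r + al := by linarith
  have hsa : (0:ℝ) < s + al := by linarith
  -- Vieta-type consequences
  have hsum : c*(r+s) = lam + del - al*c := by
    have h0 : (r - s) * (c*(r+s) - (lam+del-al*c)) = 0 := by linear_combination hr - hs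
    rcases mul_eq_zero.mp h0 with h | h
    · exfalso; linarith
    · linarith
  have hqr : c*(r*(r+al)) = (lam+del)*r + al*del := by linear_combination hr
  have hqs : c*(s*(s+al)) = (lam+del)*s + al*del := by linear_combination hs
  have hcP : c*((lam+del)*(r+s) + al*del) = (lam+del)^2 - al*lam*c := by
    linear_combination (lam+del)*hsum
  have hPneg : (lam+del)*(r+s) + al*del < 0 := by nlinarith [hcP, hcond, hc]
  have hdiff : c*(s^2*(s+al) - r^2*(r+al)) = (s-r)*((lam+del)*(r+s)+al*del) := by
    linear_combination s*hqs - r*hqr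
  have hQgt : r^2*(r+al) < s^2*(s+al) := by nlinarith [hdiff, hPneg, hrs0, hc]
  have hQDpos : 0 < r^2*(r+al) := by positivity
  have hQpos : 0 < s^2*(s+al)/(r^2*(r+al)) := div_pos (lt_trans hQDpos hQgt) hQDpos
  have hQ1 : 1 < s^2*(s+al)/(r^2*(r+al)) := (one_lt_div hQDpos).mpr hQgt
  have hb0 : 0 < b := by
    rw [hb]; exact mul_pos (one_div_pos.mpr hrs0) (Real.log_pos hQ1)
  -- the key relation from the definition of b
  have hkey : r^2*(r+al)*Real.exp (r*b) = s^2*(s+al)*Real.exp (s*b) := by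
    have hbeq : (r - s)*b = Real.log (s^2*(s+al)/(r^2*(r+al))) := by
      rw [hb]; field_simp
    have hexp : Real.exp ((r-s)*b) = s^2*(s+al)/(r^2*(r+al)) := by
      rw [hbeq, Real.exp_log hQpos]
    have h1 : Real.exp ((r-s)*b) * Real.exp (s*b) = Real.exp (r*b) := by
      rw [← Real.exp_add]; ring_nf
    have h2 : Real.exp (r*b) = s^2*(s+al)/(r^2*(r+al)) * Real.exp (s*b) := by
      rw [← h1, hexp]
    rw [h2]; field_simp
  set ER := Real.exp (r*b) with hER
  set ES := Real.exp (s*b) with hES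
  have hERpos : 0 < ER := Real.exp_pos _
  have hESpos : 0 < ES := Real.exp_pos _
  set D := r * (r + al) * ER - s * (s + al) * ES with hD
  have hDpos : 0 < D := by
    have h1 : 0 < r*(r+al)*ER := by positivity
    have h2 : s*(s+al)*ES < 0 := mul_neg_of_neg_of_pos (mul_neg_of_neg_of_pos hs2 hsa) hESpos
    rw [hD]; linarith
  have hDne : D ≠ 0 := ne_of_gt hDpos
  -- rewrite Φ as an explicit piecewise function
  have hΦfun : Φ = fun x => if x ≤ b then
        ((r + al) * Real.exp (r * x) - (s + al) * Real.exp (s * x)) / D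
      else x - b + ((r + al) * ER - (s + al) * ES) / D := by
    funext x
    rw [hΦ x]
  -- the derivative of Φ
  have hΦD : ∀ x, HasDerivAt Φ
      (if x ≤ b then (r*(r+al)*Real.exp (r*x) - s*(s+al)*Real.exp (s*x))/D else 1) x := by
    intro x
    rw [hΦfun]
    apply glue_hasDerivAt
      (f' := fun x => (r*(r+al)*Real.exp (r*x) - s*(s+al)*Real.exp (s*x))/D)
      (g' := fun _ => 1)
    · intro y
      have h1 := (((expDeriv r y).const_mul (r+al)).sub ((expDeriv s y).const_mul (s+al))).div_const D
      exact h1.congr_deriv (by ring)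
    · intro y
      have h1 := ((hasDerivAt_id y).sub_const b).add_const (((r + al) * ER - (s + al) * ES) / D)
      simpa using h1
    · rw [← hER, ← hES]; ring
    · rw [← hER, ← hES, ← hD, div_self hDne]
  have hderiv : ∀ x, deriv Φ x =
      if x ≤ b then (r*(r+al)*Real.exp (r*x) - s*(s+al)*Real.exp (s*x))/D else 1 :=
    fun x => (hΦD x).deriv
  -- continuity of Φ
  have hΦcont : Continuous Φ := by
    rw [hΦfun]
    apply Continuous.if_le
    · fun_prop
    · fun_prop
    · exact continuous_id
    · exact continuous_const
    · intro x hx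
      rw [hx, ← hER, ← hES]; ring
  -- continuity of the derivative
  have hdcont : ContinuousOn (deriv Φ) (Set.Ioi 0) := by
    have hcont : Continuous fun x => if x ≤ b then
        (r*(r+al)*Real.exp (r*x) - s*(s+al)*Real.exp (s*x))/D else (1:ℝ) := by
      apply Continuous.if_le
      · fun_prop
      · fun_prop
      · exact continuous_id
      · exact continuous_const
      · intro x hx
        rw [hx, ← hER, ← hES, ← hD, div_self hDne]
    exact hcont.continuousOn.congr (fun x _ => hderiv x)
  -- ψ'' ≤ 0 below b
  have hpp : ∀ u ≤ b, r^2*(r+al)*Real.exp (r*u) - s^2*(s+al)*Real.exp (s*u) ≤ 0 := by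
    intro u hu
    have h1 : Real.exp (r*u) * ES ≤ ER * Real.exp (s*u) := by
      rw [hER, hES, ← Real.exp_add, ← Real.exp_add]
      apply Real.exp_le_exp.mpr
      nlinarith [hrs0, hu]
    have h2 : r^2*(r+al)*Real.exp (r*u) * ES ≤ s^2*(s+al)*Real.exp (s*u) * ES := by
      calc r^2*(r+al)*Real.exp (r*u) * ES = r^2*(r+al)*(Real.exp (r*u) * ES) := by ring
      _ ≤ r^2*(r+al)*(ER * Real.exp (s*u)) := mul_le_mul_of_nonneg_left h1 hQDpos.le
      _ = (r^2*(r+al)*ER) * Real.exp (s*u) := by ring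
      _ = (s^2*(s+al)*ES) * Real.exp (s*u) := by rw [hkey]
      _ = s^2*(s+al)*Real.exp (s*u) * ES := by ring
    have h3 : r^2*(r+al)*Real.exp (r*u) ≤ s^2*(s+al)*Real.exp (s*u) :=
      le_of_mul_le_mul_right h2 hESpos
    linarith
  -- ψ' ≥ D on [0, b]
  have hmono : ∀ x ∈ Set.Icc (0:ℝ) b,
      D ≤ r*(r+al)*Real.exp (r*x) - s*(s+al)*Real.exp (s*x) := by
    have hanti : AntitoneOn (fun u => r*(r+al)*Real.exp (r*u) - s*(s+al)*Real.exp (s*u))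
        (Set.Icc (0:ℝ) b) := by
      apply antitoneOn_of_deriv_nonpos (convex_Icc 0 b)
      · fun_prop
      · apply Differentiable.differentiableOn; fun_prop
      · intro u hu
        rw [interior_Icc] at hu
        have hder : HasDerivAt (fun u => r*(r+al)*Real.exp (r*u) - s*(s+al)*Real.exp (s*u))
            (r^2*(r+al)*Real.exp (r*u) - s^2*(s+al)*Real.exp (s*u)) u := by
          have h1 := ((expDeriv r u).const_mul (r*(r+al))).sub ((expDeriv s u).const_mul (s*(s+al)))
          exact h1.congr_deriv (by ring)
        rw [hder.deriv]
        exact hpp u hu.2.le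
    intro x hx
    have := hanti hx (Set.right_mem_Icc.mpr hb0.le) hx.2
    calc D = r*(r+al)*Real.exp (r*b) - s*(s+al)*Real.exp (s*b) := by rw [← hER, ← hES, hD]
    _ ≤ _ := this
  -- antiderivative for the convolution integral
  set K := ((r + al) * ER - (s + al) * ES) / D with hK
  set G : ℝ → ℝ := fun u => if u ≤ b then al*(Real.exp ((r+al)*u) - Real.exp ((s+al)*u))/D
      else (u - b + (K - 1/al))*Real.exp (al*u) - (K - 1/al)*Real.exp (al*b)
        + al*(Real.exp ((r+al)*b) - Real.exp ((s+al)*b))/D with hGdef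
  have hGD : ∀ u, HasDerivAt G (Φ u * (al * Real.exp (al*u))) u := by
    intro u
    have h0 := glue_hasDerivAt (b := b)
      (f := fun u => al*(Real.exp ((r+al)*u) - Real.exp ((s+al)*u))/D)
      (g := fun u => (u - b + (K - 1/al))*Real.exp (al*u) - (K - 1/al)*Real.exp (al*b)
        + al*(Real.exp ((r+al)*b) - Real.exp ((s+al)*b))/D)
      (f' := fun u => al*((r+al)*Real.exp ((r+al)*u) - (s+al)*Real.exp ((s+al)*u))/D)
      (g' := fun u => al*(u - b + K)*Real.exp (al*u))
      (fun y => (((expDeriv (r+al) y).sub (expDeriv (s+al) y)).const_mul al).div_const D)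
      (fun y => by
        have h2 := (((hasDerivAt_id y).sub_const b).add_const (K - 1/al)).mul (expDeriv al y)
        have h3 := (h2.sub_const ((K - 1/al)*Real.exp (al*b))).add_const
          (al*(Real.exp ((r+al)*b) - Real.exp ((s+al)*b))/D)
        simp only [id_eq] at h3
        exact h3.congr_deriv (by field_simp; ring))
      (by ring)
      (by
        rw [show (r+al)*b = r*b + al*b by ring, show (s+al)*b = s*b + al*b by ring,
          Real.exp_add, Real.exp_add, ← hER, ← hES, hK]
        field_simp; ring)
      u
    rw [hGdef]
    convert h0 using 1
    rw [hΦ u]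
    rcases le_or_gt u b with h | h
    · rw [if_pos h, if_pos h]
      rw [show (r+al)*u = r*u + al*u by ring, show (s+al)*u = s*u + al*u by ring,
        Real.exp_add, Real.exp_add]
      field_simp
    · rw [if_neg (not_le.mpr h), if_neg (not_le.mpr h), hK]
      ring
  have hGint : ∀ x : ℝ, (∫ u in (0:ℝ)..x, Φ u * (al * Real.exp (al*u))) = G x - G 0 := by
    intro x
    apply intervalIntegral.integral_eq_sub_of_hasDerivAt (fun u _ => hGD u)
    apply Continuous.intervalIntegrable
    fun_prop
  have hG0 : G 0 = 0 := by
    rw [hGdef]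
    simp only [if_pos hb0.le]
    norm_num
  -- substitution in the convolution integral
  have hsub : ∀ x : ℝ, (∫ y in (0:ℝ)..x, Φ (x - y) * (al * Real.exp (-al * y)))
      = (G x - G 0) * Real.exp (-al*x) := by
    intro x
    calc (∫ y in (0:ℝ)..x, Φ (x - y) * (al * Real.exp (-al * y)))
        = ∫ y in (0:ℝ)..x, (fun u => Φ u * (al * Real.exp (al*u))) (x - y) * Real.exp (-al*x) := by
          apply intervalIntegral.integral_congr
          intro y _
          simp only
          rw [show Real.exp (-al*y) = Real.exp (al*(x-y)) * Real.exp (-al*x) by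
            rw [← Real.exp_add]; ring_nf]
          ring
      _ = (∫ y in (0:ℝ)..x, (fun u => Φ u * (al * Real.exp (al*u))) (x - y)) * Real.exp (-al*x) :=
          intervalIntegral.integral_mul_const _ _
      _ = (∫ u in (x-x)..(x-0), Φ u * (al * Real.exp (al*u))) * Real.exp (-al*x) := by
          rw [intervalIntegral.integral_comp_sub_left (fun u => Φ u * (al * Real.exp (al*u))) x]
      _ = (G x - G 0) * Real.exp (-al*x) := by
          rw [show x - x = (0:ℝ) by ring, sub_zero, hGint x]
  -- two key scalar identities
  have I1 : lam*(s^2*ES - r^2*ER) = del*D := by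
    rw [hD]; linear_combination (r*ER)*hqr - (s*ES)*hqs - c*hkey
  have I2 : (al*c - lam - del)*D = del*al*((r+al)*ER - (s+al)*ES) := by
    rw [hD]; linear_combination ((r+al)*ER)*hqr - ((s+al)*ES)*hqs - c*hkey
  have e1 : c - lam/al - del*K = del/al := by
    have h9 : c - lam/al - del*K
        = ((al*c - lam)*D - del*al*((r+al)*ER-(s+al)*ES))/(al*D) := by
      rw [hK]; field_simp
    have h10 : (al*c - lam)*D - del*al*((r+al)*ER-(s+al)*ES) = del*D := by
      linear_combination I2
    rw [h9, h10]
    rw [mul_comm al D, mul_comm del D, mul_div_mul_left del al hDne]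
  have e2 : lam*(al*(ER - ES)/D - K + 1/al) = -(del/al) := by
    have h7 : al*(ER - ES)/D - K + 1/al = (r^2*ER - s^2*ES)/(al*D) := by
      rw [hK]; field_simp; ring
    have h8 : lam*(r^2*ER - s^2*ES) = -(del*D) := by linear_combination -I1
    calc lam*(al*(ER - ES)/D - K + 1/al) = (lam*(r^2*ER - s^2*ES))/(al*D) := by
          rw [h7]; ring
    _ = (-(del*D))/(al*D) := by rw [h8]
    _ = -(del/al) := by
          field_simp
  refine ⟨hb0, fun x _ => (hΦD x).differentiableAt, hdcont, ?_⟩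
  intro x hx
  rw [hderiv x, hsub x, hG0, sub_zero]
  rcases le_or_gt x b with hxb | hxb
  · -- continuation region
    rw [hΦ x]
    simp only [if_pos hxb]
    have hGx : G x = al*(Real.exp ((r+al)*x) - Real.exp ((s+al)*x))/D := by
      rw [hGdef]; simp only [if_pos hxb]
    rw [hGx]
    have hzero : c * ((r*(r+al)*Real.exp (r*x) - s*(s+al)*Real.exp (s*x))/D)
        - (lam+del) * (((r+al)*Real.exp (r*x) - (s+al)*Real.exp (s*x))/D)
        + lam * (al*(Real.exp ((r+al)*x) - Real.exp ((s+al)*x))/D * Real.exp (-al*x)) = 0 := by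
      have hz' : c*(r*(r+al)*Real.exp (r*x) - s*(s+al)*Real.exp (s*x))
          - (lam+del)*((r+al)*Real.exp (r*x) - (s+al)*Real.exp (s*x))
          + lam*(al*(Real.exp (r*x) - Real.exp (s*x))) = 0 := by
        linear_combination Real.exp (r*x) * hr - Real.exp (s*x) * hs
      calc c * ((r*(r+al)*Real.exp (r*x) - s*(s+al)*Real.exp (s*x))/D)
          - (lam+del) * (((r+al)*Real.exp (r*x) - (s+al)*Real.exp (s*x))/D)
          + lam * (al*(Real.exp ((r+al)*x) - Real.exp ((s+al)*x))/D * Real.exp (-al*x))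
          = (c*(r*(r+al)*Real.exp (r*x) - s*(s+al)*Real.exp (s*x))
          - (lam+del)*((r+al)*Real.exp (r*x) - (s+al)*Real.exp (s*x))
          + lam*(al*(Real.exp (r*x) - Real.exp (s*x))))/D := by
            rw [show (r+al)*x = r*x + al*x by ring, show (s+al)*x = s*x + al*x by ring,
              Real.exp_add, Real.exp_add, neg_mul, Real.exp_neg]
            field_simp
      _ = 0/D := by rw [hz']
      _ = 0 := zero_div D
    rw [hzero]
    apply max_eq_left
    have h1 : (1:ℝ) ≤ (r*(r+al)*Real.exp (r*x) - s*(s+al)*Real.exp (s*x))/D :=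
      (one_le_div hDpos).mpr (hmono x ⟨hx.le, hxb⟩)
    linarith
  · -- linear region
    rw [hΦ x]
    simp only [if_neg (not_le.mpr hxb)]
    have hGx : G x = (x - b + (K - 1/al))*Real.exp (al*x) - (K - 1/al)*Real.exp (al*b)
        + al*(Real.exp ((r+al)*b) - Real.exp ((s+al)*b))/D := by
      rw [hGdef]; simp only [if_neg (not_le.mpr hxb)]
    rw [hGx]
    have hA : c * 1 - (lam+del) * (x - b + ((r+al)*ER - (s+al)*ES)/D)
        + lam * (((x - b + (K - 1/al))*Real.exp (al*x) - (K - 1/al)*Real.exp (al*b)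
          + al*(Real.exp ((r+al)*b) - Real.exp ((s+al)*b))/D) * Real.exp (-al*x))
        = (del/al)*(1 - Real.exp (al*b)*(Real.exp (al*x))⁻¹ - al*(x-b)) := by
      calc c * 1 - (lam+del) * (x - b + ((r+al)*ER - (s+al)*ES)/D)
          + lam * (((x - b + (K - 1/al))*Real.exp (al*x) - (K - 1/al)*Real.exp (al*b)
            + al*(Real.exp ((r+al)*b) - Real.exp ((s+al)*b))/D) * Real.exp (-al*x))
          = (c - lam/al - del*K) - del*(x-b)
            + (Real.exp (al*b) * (Real.exp (al*x))⁻¹) * (lam*(al*(ER - ES)/D - K + 1/al)) := by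
            rw [show (r+al)*b = r*b + al*b by ring, show (s+al)*b = s*b + al*b by ring,
              Real.exp_add, Real.exp_add, ← hER, ← hES, neg_mul, Real.exp_neg, hK]
            field_simp
            ring
        _ = (del/al) - del*(x-b) + (Real.exp (al*b) * (Real.exp (al*x))⁻¹) * (-(del/al)) := by
            rw [e1, e2]
        _ = (del/al)*(1 - Real.exp (al*b)*(Real.exp (al*x))⁻¹ - al*(x-b)) := by
            field_simp; ring
    rw [hA]
    have hEb : 1 - al*(x-b) ≤ Real.exp (al*b) * (Real.exp (al*x))⁻¹ := by
      have h0 := Real.add_one_le_exp (-(al*(x-b)))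
      rw [show -(al*(x-b)) = al*b - al*x by ring, Real.exp_sub, div_eq_mul_inv] at h0
      linarith
    have h5 : 1 - Real.exp (al*b)*(Real.exp (al*x))⁻¹ - al*(x-b) ≤ 0 := by linarith
    have h6 : (del/al)*(1 - Real.exp (al*b)*(Real.exp (al*x))⁻¹ - al*(x-b)) ≤ 0 :=
      mul_nonpos_of_nonneg_of_nonpos (le_of_lt (div_pos hdel hal)) h5
    rw [show (1:ℝ) - 1 = 0 by ring]
    exact max_eq_right h6
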